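/- With the notation of Guignard's lemma (g : ℝⁿ → E differentiable, K closed convex cone, g(x̄) ∈ K), the linearized cone L = {d : Dg(x̄)d ∈ T_K(g(x̄))} equals the polar of H = Dg(x̄)ᵀ[N_K(g(x̄))]; i.e., L = H°. -/

import Mathlib

open scoped RealInnerProductSpace

/-- Polar of a set in a real inner product space. -/
def polarSet {E : Type*} [NormedAddCommGroup E] [InnerProductSpace ℝ E] (S : Set E) : Set E :=
  {z | ∀ y ∈ S, ⟪z, y⟫ ≤ 0}

/-- Tangent cone to a convex set `K` at `y`: the closure of the cone of feasible directions. -/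
def tangentConeCvx {E : Type*} [NormedAddCommGroup E] [InnerProductSpace ℝ E]
    (K : Set E) (y : E) : Set E :=
  closure {w | ∃ c : ℝ, 0 ≤ c ∧ ∃ k ∈ K, w = c • (k - y)}

section Aux

variable {E : Type*} [NormedAddCommGroup E] [InnerProductSpace ℝ E]

lemma polarSet_eq_dual_neg [CompleteSpace E] (S : Set E) :
    polarSet S = ((ProperCone.innerDual (-S : Set E) : Set E)) := by
  ext z
  simp only [polarSet, Set.mem_setOf_eq, SetLike.mem_coe, ProperCone.mem_innerDual]
  constructor
  · rintro h x hx
    rcases Set.mem_neg.mp hx with hx'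
    have := h (-x) hx'
    rw [real_inner_comm] at this
    simpa using this
  · intro h y hy
    have := h (x := -y) (by simpa using Set.neg_mem_neg.mpr hy)
    rw [real_inner_comm] at this
    simpa using this

lemma polar_polar_eq_dual_dual [CompleteSpace E] (T : Set E) :
    polarSet (polarSet T) = ((ProperCone.innerDual (ProperCone.innerDual T : Set E) : Set E)) := by
  ext z
  simp only [polarSet, Set.mem_setOf_eq, SetLike.mem_coe, ProperCone.mem_innerDual]
  constructor
  · intro hz y hy
    have hmem : ∀ x ∈ T, ⟪-y, x⟫ ≤ 0 := by
      intro x hx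
      have := hy (x := x) hx
      rw [real_inner_comm] at this
      simpa using this
    have := hz (-y) hmem
    rw [real_inner_comm] at this
    simpa using this
  · intro hz y hy
    have hmem : ∀ x ∈ T, 0 ≤ ⟪x, -y⟫ := by
      intro x hx
      have := hy x hx
      rw [real_inner_comm] at this
      simpa using this
    have := hz (x := -y) hmem
    rw [real_inner_comm] at this
    simpa using this

/-- The feasible-direction cone as a convex cone. -/
def fdCone (K : Set E) (hconv : Convex ℝ K) (y : E) : ConvexCone ℝ E where
  carrier := {w | ∃ c : ℝ, 0 ≤ c ∧ ∃ k ∈ K, w = c • (k - y)}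
  smul_mem' := by
    rintro c hc w ⟨c', hc', k, hk, rfl⟩
    exact ⟨c * c', mul_nonneg hc.le hc', k, hk, smul_smul c c' _⟩
  add_mem' := by
    rintro w1 ⟨c1, hc1, k1, hk1, rfl⟩ w2 ⟨c2, hc2, k2, hk2, rfl⟩
    rcases eq_or_lt_of_le hc1 with h1 | h1
    · refine ⟨c2, hc2, k2, hk2, by rw [← h1]; simp⟩
    rcases eq_or_lt_of_le hc2 with h2 | h2
    · refine ⟨c1, hc1, k1, hk1, by rw [← h2]; simp⟩
    have hs : 0 < c1 + c2 := by linarith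
    refine ⟨c1 + c2, hs.le, (c1 / (c1 + c2)) • k1 + (c2 / (c1 + c2)) • k2, ?_, ?_⟩
    · exact hconv hk1 hk2 (div_nonneg h1.le hs.le) (div_nonneg h2.le hs.le)
        (by field_simp)
    · rw [smul_sub (c1 + c2), smul_add, smul_smul, smul_smul,
        mul_div_cancel₀ _ hs.ne', mul_div_cancel₀ _ hs.ne', add_smul, smul_sub, smul_sub]
      abel

lemma bipolar_tangent [CompleteSpace E] (K : Set E) (hconv : Convex ℝ K) {y : E} (hy : y ∈ K) :
    polarSet (polarSet (tangentConeCvx K y)) = tangentConeCvx K y := by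
  set C : ConvexCone ℝ E := (fdCone K hconv y).closure with hC
  have hT : tangentConeCvx K y = (C : Set E) := by
    rw [hC, ConvexCone.coe_closure]; rfl
  have hne : (C : Set E).Nonempty := by
    refine ⟨0, ?_⟩
    rw [hC, ConvexCone.coe_closure]
    exact subset_closure ⟨0, le_rfl, y, hy, by simp⟩
  have hcl : IsClosed (C : Set E) := by
    rw [hC, ConvexCone.coe_closure]; exact isClosed_closure
  rw [hT, polar_polar_eq_dual_dual]
  exact congrArg (fun P : ProperCone ℝ E => (P : Set E)) (ProperCone.innerDual_innerDual
    (⟨C.toPointedCone (by show (0 : E) ∈ (C : Set E); rw [hC, ConvexCone.coe_closure]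
                          exact subset_closure ⟨0, le_rfl, y, hy, by simp⟩), hcl⟩ : ProperCone ℝ E))

end Aux

/-- The linearized cone `L = {d : Dg(x̄)d ∈ T_K(g(x̄))}` equals the polar of
`H = Dg(x̄)ᵀ[N_K(g(x̄))]`, i.e. `L = H°`. -/
theorem stmt2 {n : ℕ} {E : Type*} [NormedAddCommGroup E] [InnerProductSpace ℝ E]
    [FiniteDimensional ℝ E] (K : Set E) (hclosed : IsClosed K) (hconv : Convex ℝ K)
    (hcone : ∀ x ∈ K, ∀ c : ℝ, 0 ≤ c → c • x ∈ K)
    (g : EuclideanSpace ℝ (Fin n) → E) (x0 : EuclideanSpace ℝ (Fin n))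
    (Dg : EuclideanSpace ℝ (Fin n) →L[ℝ] E) (hg : HasFDerivAt g Dg x0)
    (hfeas : g x0 ∈ K) :
    {d | Dg d ∈ tangentConeCvx K (g x0)} =
      polarSet (⇑(ContinuousLinearMap.adjoint Dg) ''
        polarSet (tangentConeCvx K (g x0))) := by
  have key : ∀ d, d ∈ polarSet (⇑(ContinuousLinearMap.adjoint Dg) ''
      polarSet (tangentConeCvx K (g x0))) ↔
      Dg d ∈ polarSet (polarSet (tangentConeCvx K (g x0))) := by
    intro d
    constructor
    · intro hd y hy
      have := hd (ContinuousLinearMap.adjoint Dg y) ⟨y, hy, rfl⟩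
      rwa [ContinuousLinearMap.adjoint_inner_right] at this
    · rintro hd z ⟨y, hy, rfl⟩
      have := hd y hy
      rwa [← ContinuousLinearMap.adjoint_inner_right] at this
  ext d
  rw [Set.mem_setOf_eq, key, bipolar_tangent K hconv hfeas]
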